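/- For r ≥ 2, min_j { q_j + ∑ᵢ ‖(qᵢρᵢ − q_jρ_j)⁺‖₁ } ≤ (1/r)·(1 + ∑_{1≤i<j≤r} ‖qᵢρᵢ − q_jρ_j‖₁); i.e., the Qiu–Li style upper bound Q₄ is always at most the new upper bound Q_new. -/

import Mathlib

open scoped ComplexOrder

/-- The operator absolute value `√(AᴴA)` of a matrix. -/
noncomputable def matAbs {n : ℕ} (A : Matrix (Fin n) (Fin n) ℂ) : Matrix (Fin n) (Fin n) ℂ :=
  (Matrix.posSemidef_conjTranspose_mul_self A).1.eigenvectorUnitary.1 *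
    Matrix.diagonal ((↑) ∘ (Real.sqrt ·) ∘ (Matrix.posSemidef_conjTranspose_mul_self A).1.eigenvalues) *
    (star (Matrix.posSemidef_conjTranspose_mul_self A).1.eigenvectorUnitary : Matrix (Fin n) (Fin n) ℂ)

/-- The trace norm `‖A‖₁ = tr √(AᴴA)`. -/
noncomputable def traceNorm {n : ℕ} (A : Matrix (Fin n) (Fin n) ℂ) : ℝ :=
  ((matAbs A).trace).re

/-- The positive part `A⁺ = (|A| + A)/2` of a self-adjoint matrix `A`, so that
`A = A⁺ - A⁻` with `A⁺, A⁻ ≥ 0`. -/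
noncomputable def matPosPart {n : ℕ} (A : Matrix (Fin n) (Fin n) ℂ) : Matrix (Fin n) (Fin n) ℂ :=
  (2 : ℂ)⁻¹ • (matAbs A + A)

/-- A density operator: positive semidefinite with unit trace. -/
def IsDensity {n : ℕ} (ρ : Matrix (Fin n) (Fin n) ℂ) : Prop :=
  ρ.PosSemidef ∧ ρ.trace = 1

/-- A POVM with `r` outcomes: positive semidefinite effects summing to the identity. -/
def IsPOVM {n r : ℕ} (M : Fin r → Matrix (Fin n) (Fin n) ℂ) : Prop :=
  (∀ i, (M i).PosSemidef) ∧ ∑ i, M i = 1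

/-- Success probability `∑ i, q i * tr (ρ i * M i)` of a measurement. -/
noncomputable def successProb {n r : ℕ} (q : Fin r → ℝ)
    (ρ M : Fin r → Matrix (Fin n) (Fin n) ℂ) : ℝ :=
  ∑ i, q i * ((ρ i * M i).trace).re

/-- Optimal success probability under minimum-error discrimination. -/
noncomputable def optSuccess {n r : ℕ} (q : Fin r → ℝ)
    (ρ : Fin r → Matrix (Fin n) (Fin n) ℂ) : ℝ :=
  sSup {p | ∃ M, IsPOVM M ∧ p = successProb q ρ M}

section aux
open Matrix
variable {n : ℕ}

lemma matAbs_eq_cfc (A : Matrix (Fin n) (Fin n) ℂ) :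
    matAbs A = cfc Real.sqrt (Aᴴ * A) := by
  rw [(posSemidef_conjTranspose_mul_self A).1.cfc_eq]
  simp [IsHermitian.cfc, matAbs, Unitary.conjStarAlgAut_apply, Function.comp_def]

open scoped MatrixOrder in
lemma eq_matAbs_of_sq_eq {B : Matrix (Fin n) (Fin n) ℂ} (hB : B.PosSemidef)
    (A : Matrix (Fin n) (Fin n) ℂ) (h : B ^ 2 = Aᴴ * A) : B = matAbs A := by
  have hM : (Aᴴ * A).PosSemidef := posSemidef_conjTranspose_mul_self A
  rw [matAbs_eq_cfc, ← cfcₙ_eq_cfc, ← CFC.sqrt_eq_real_sqrt _ hM.nonneg,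
    CFC.sqrt_unique (by rw [← h, pow_two]) hB.nonneg]

lemma matAbs_neg (A : Matrix (Fin n) (Fin n) ℂ) : matAbs (-A) = matAbs A := by
  rw [matAbs_eq_cfc, matAbs_eq_cfc]; simp

/-- conjugation of a real diagonal by the eigenvector unitary -/
noncomputable def conjD {A : Matrix (Fin n) (Fin n) ℂ} (hA : A.IsHermitian) (f : Fin n → ℝ) :
    Matrix (Fin n) (Fin n) ℂ :=
  (hA.eigenvectorUnitary : Matrix (Fin n) (Fin n) ℂ) * Matrix.diagonal (fun i => (f i : ℂ)) *
    star (hA.eigenvectorUnitary : Matrix (Fin n) (Fin n) ℂ)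

lemma conjD_mul {A : Matrix (Fin n) (Fin n) ℂ} (hA : A.IsHermitian) (f g : Fin n → ℝ) :
    conjD hA f * conjD hA g = conjD hA (f * g) := by
  have h1 : star (hA.eigenvectorUnitary : Matrix (Fin n) (Fin n) ℂ) *
      (hA.eigenvectorUnitary : Matrix (Fin n) (Fin n) ℂ) = 1 :=
    Matrix.mem_unitaryGroup_iff'.mp (hA.eigenvectorUnitary).2
  simp only [conjD, Matrix.mul_assoc]
  rw [← Matrix.mul_assoc (star _) _, h1, Matrix.one_mul, ← Matrix.mul_assoc (diagonal _),
    Matrix.diagonal_mul_diagonal]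
  simp only [Pi.mul_apply, Complex.ofReal_mul]

lemma conjD_add {A : Matrix (Fin n) (Fin n) ℂ} (hA : A.IsHermitian) (f g : Fin n → ℝ) :
    conjD hA f + conjD hA g = conjD hA (f + g) := by
  simp only [conjD, ← Matrix.add_mul, ← Matrix.mul_add, ← Matrix.diagonal_add,
    Pi.add_apply, Complex.ofReal_add]

lemma conjD_posSemidef {A : Matrix (Fin n) (Fin n) ℂ} (hA : A.IsHermitian) {f : Fin n → ℝ}
    (hf : ∀ i, 0 ≤ f i) : (conjD hA f).PosSemidef := by
  have h1 : (Matrix.diagonal (fun i => (f i : ℂ))).PosSemidef :=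
    Matrix.posSemidef_diagonal_iff.mpr fun i => by
      simpa using Complex.zero_le_real.mpr (hf i)
  simpa [conjD, star_eq_conjTranspose, Matrix.mul_assoc] using
    h1.mul_mul_conjTranspose_same (hA.eigenvectorUnitary : Matrix (Fin n) (Fin n) ℂ)

lemma spectral' {A : Matrix (Fin n) (Fin n) ℂ} (hA : A.IsHermitian) :
    A = conjD hA hA.eigenvalues := by
  simpa [conjD, Function.comp_def] using hA.spectral_theorem

lemma matAbs_eq {A : Matrix (Fin n) (Fin n) ℂ} (hA : A.IsHermitian) :
    matAbs A = conjD hA (fun i => |hA.eigenvalues i|) := by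
  refine (eq_matAbs_of_sq_eq (conjD_posSemidef hA (fun i => abs_nonneg _)) A ?_).symm
  have hAA : A * A = conjD hA (hA.eigenvalues * hA.eigenvalues) := by
    conv_lhs => rw [spectral' hA]
    rw [conjD_mul]
  have hfun : ((fun i => |hA.eigenvalues i|) * fun i => |hA.eigenvalues i|)
      = hA.eigenvalues * hA.eigenvalues := by
    funext i
    simp only [Pi.mul_apply]
    exact abs_mul_abs_self _
  rw [pow_two, conjD_mul, hfun, hA.eq, hAA]

lemma matAbs_add_self {A : Matrix (Fin n) (Fin n) ℂ} (hA : A.IsHermitian) :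
    matAbs A + A = conjD hA (fun i => |hA.eigenvalues i| + hA.eigenvalues i) := by
  have h := conjD_add hA (fun i => |hA.eigenvalues i|) hA.eigenvalues
  rw [← matAbs_eq hA, ← spectral' hA] at h
  exact h

lemma conjD_half {A : Matrix (Fin n) (Fin n) ℂ} (hA : A.IsHermitian) (f : Fin n → ℝ) :
    (2 : ℂ)⁻¹ • conjD hA f = conjD hA (fun i => (2:ℝ)⁻¹ * f i) := by
  rw [conjD, conjD, ← Matrix.smul_mul, ← Matrix.mul_smul, ← Matrix.diagonal_smul]
  have h : ((2:ℂ)⁻¹ • fun i => ((f i : ℂ))) = fun i => (((2:ℝ)⁻¹ * f i : ℝ) : ℂ) := by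
    funext i
    simp [Pi.smul_apply]
  rw [h]

lemma matPosPart_posSemidef {A : Matrix (Fin n) (Fin n) ℂ} (hA : A.IsHermitian) :
    (matPosPart A).PosSemidef := by
  rw [matPosPart, matAbs_add_self hA, conjD_half]
  exact conjD_posSemidef hA fun i => by
    have := neg_abs_le (hA.eigenvalues i); linarith

lemma matPosPart_add_neg {A : Matrix (Fin n) (Fin n) ℂ} :
    matPosPart A + matPosPart (-A) = matAbs A := by
  rw [matPosPart, matPosPart, matAbs_neg, ← smul_add]
  have h : matAbs A + A + (matAbs A + -A) = (2 : ℂ) • matAbs A := by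
    rw [two_smul]; abel
  rw [h, smul_smul]
  norm_num

lemma traceNorm_of_posSemidef {X : Matrix (Fin n) (Fin n) ℂ} (hX : X.PosSemidef) :
    traceNorm X = X.trace.re := by
  have h : matAbs X = X :=
    (eq_matAbs_of_sq_eq hX X (by rw [pow_two, hX.1.eq])).symm
  rw [traceNorm, h]

lemma key_split {A : Matrix (Fin n) (Fin n) ℂ} (hA : A.IsHermitian) :
    traceNorm (matPosPart A) + traceNorm (matPosPart (-A)) = traceNorm A := by
  rw [traceNorm_of_posSemidef (matPosPart_posSemidef hA),
    traceNorm_of_posSemidef (matPosPart_posSemidef hA.neg), ← Complex.add_re,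
    ← Matrix.trace_add, matPosPart_add_neg]
  rfl

lemma traceNorm_matPosPart_zero : traceNorm (matPosPart (0 : Matrix (Fin n) (Fin n) ℂ)) = 0 := by
  have h0 : matAbs (0 : Matrix (Fin n) (Fin n) ℂ) = 0 :=
    (eq_matAbs_of_sq_eq Matrix.PosSemidef.zero 0 (by simp)).symm
  have h1 : matPosPart (0 : Matrix (Fin n) (Fin n) ℂ) = 0 := by
    rw [matPosPart, h0]; simp
  rw [h1, traceNorm, h0]
  simp

end aux

set_option maxHeartbeats 1000000 in
theorem stmt14 {n r : ℕ} (hr : 2 ≤ r) (ρ : Fin r → Matrix (Fin n) (Fin n) ℂ)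
    (q : Fin r → ℝ) (hρ : ∀ i, IsDensity (ρ i)) (hq : ∀ i, 0 < q i)
    (hq1 : ∑ i, q i = 1) :
    Finset.univ.inf' (Finset.univ_nonempty_iff.mpr ⟨⟨0, by omega⟩⟩)
        (fun j => q j + ∑ i, traceNorm (matPosPart ((q i : ℂ) • ρ i - (q j : ℂ) • ρ j)))
      ≤ (1 / (r : ℝ)) * (1 +
          ∑ p ∈ Finset.univ.filter (fun p : Fin r × Fin r => p.1 < p.2),
            traceNorm ((q p.1 : ℂ) • ρ p.1 - (q p.2 : ℂ) • ρ p.2)) := by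
  classical
  have hr0 : 0 < r := by omega
  have hrpos : (0 : ℝ) < r := by exact_mod_cast hr0
  let g : Fin r → Fin r → ℝ :=
    fun i j => traceNorm (matPosPart ((q i : ℂ) • ρ i - (q j : ℂ) • ρ j))
  have hherm : ∀ i j, ((q i : ℂ) • ρ i - (q j : ℂ) • ρ j).IsHermitian := fun i j => by
    have h1 := (hρ i).1.1
    have h2 := (hρ j).1.1
    simp [Matrix.IsHermitian, Matrix.conjTranspose_sub, Matrix.conjTranspose_smul,
      Complex.star_def, Complex.conj_ofReal, h1.eq, h2.eq]
  have hkey : ∀ i j, g i j + g j i = traceNorm ((q i : ℂ) • ρ i - (q j : ℂ) • ρ j) := by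
    intro i j
    have h := key_split (hherm i j)
    rwa [neg_sub] at h
  have hdiag : ∀ i, g i i = 0 := fun i => by
    simp only [g, sub_self]
    exact traceNorm_matPosPart_zero
  set m := Finset.univ.inf' (Finset.univ_nonempty_iff.mpr ⟨⟨0, by omega⟩⟩)
      (fun j => q j + ∑ i, traceNorm (matPosPart ((q i : ℂ) • ρ i - (q j : ℂ) • ρ j))) with hm
  have hinf : ∀ j : Fin r, m ≤ q j + ∑ i, g i j := fun j =>
    Finset.inf'_le _ (Finset.mem_univ j)
  have hsum : m * r ≤ ∑ j, (q j + ∑ i, g i j) := by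
    calc m * r = ∑ _j : Fin r, m := by
          rw [Finset.sum_const, Finset.card_univ, Fintype.card_fin, nsmul_eq_mul, mul_comm]
      _ ≤ _ := Finset.sum_le_sum fun j _ => hinf j
  -- the double sum identity
  have hpair : ∑ j, ∑ i, g i j
      = ∑ p ∈ Finset.univ.filter (fun p : Fin r × Fin r => p.1 < p.2),
          traceNorm ((q p.1 : ℂ) • ρ p.1 - (q p.2 : ℂ) • ρ p.2) := by
    have h1 : ∑ j, ∑ i, g i j = ∑ p ∈ (Finset.univ : Finset (Fin r × Fin r)), g p.2 p.1 := by
      rw [← Finset.univ_product_univ, Finset.sum_product]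
    have h2 : ∑ p ∈ Finset.univ.filter (fun p : Fin r × Fin r => ¬ p.1 < p.2), g p.2 p.1
        = ∑ p ∈ Finset.univ.filter (fun p : Fin r × Fin r => p.2 < p.1), g p.2 p.1 := by
      refine (Finset.sum_subset ?_ ?_).symm
      · intro p hp
        simp only [Finset.mem_filter, Finset.mem_univ, true_and] at hp ⊢
        exact lt_asymm hp
      · intro p hp hnp
        simp only [Finset.mem_filter, Finset.mem_univ, true_and, not_lt] at hp hnp
        have : p.1 = p.2 := le_antisymm hnp hp
        rw [show p.2 = p.1 from this.symm]
        exact hdiag p.1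
    have h3 : ∑ p ∈ Finset.univ.filter (fun p : Fin r × Fin r => p.2 < p.1), g p.2 p.1
        = ∑ p ∈ Finset.univ.filter (fun p : Fin r × Fin r => p.1 < p.2), g p.1 p.2 := by
      refine Finset.sum_nbij' Prod.swap Prod.swap ?_ ?_ ?_ ?_ ?_
      · intro p hp; simpa using (Finset.mem_filter.mp hp).2
      · intro p hp; simpa using (Finset.mem_filter.mp hp).2
      · intro p _; exact Prod.swap_swap p
      · intro p _; exact Prod.swap_swap p
      · intro p _; rfl
    rw [h1, ← Finset.sum_filter_add_sum_filter_not Finset.univ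
      (fun p : Fin r × Fin r => p.1 < p.2) (fun p => g p.2 p.1), h2, h3,
      ← Finset.sum_add_distrib]
    exact Finset.sum_congr rfl fun p _ => by rw [add_comm]; exact hkey p.1 p.2
  have htot : ∑ j, (q j + ∑ i, g i j)
      = 1 + ∑ p ∈ Finset.univ.filter (fun p : Fin r × Fin r => p.1 < p.2),
          traceNorm ((q p.1 : ℂ) • ρ p.1 - (q p.2 : ℂ) • ρ p.2) := by
    rw [Finset.sum_add_distrib, hq1, hpair]
  rw [htot] at hsum
  rw [one_div, inv_mul_eq_div, le_div_iff₀ hrpos]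
  exact hsum
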